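/- Suppose there exist C > 1, γ ∈ [0,1) and a current-mode-dependent memory controller Ψ_d such that ‖φ(k, σ, x₀, Ψ_d)‖ ≤ C γ^k ‖x₀‖ for all x₀, σ, k. Then the mode-dependent value function V_d satisfies the dynamic programming equation V_d(x) = ‖x‖ + max_{i ∈ Σ} min_{u ∈ ℝ^m} V_d(A_i x + B_i u) for all x ∈ ℝⁿ, where for each i ∈ Σ the minimum over u ∈ ℝ^m is attained. -/

import Mathlib

open Matrix Filter ENNReal

noncomputable section

/-- State history `[x(k), …, x(0)]` of the closed loop driven by the reversed
mode list `[i_{k-1}, …, i_0]`, under a current-mode-dependent memory controller `Ψd`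
(which also sees the current mode). -/
def memHistD {n m : ℕ} {S : Type*} (A : S → Matrix (Fin n) (Fin n) ℝ)
    (B : S → Matrix (Fin n) (Fin m) ℝ)
    (Ψd : List (EuclideanSpace ℝ (Fin n)) → List S → EuclideanSpace ℝ (Fin m))
    (x0 : EuclideanSpace ℝ (Fin n)) : List S → List (EuclideanSpace ℝ (Fin n))
  | [] => [x0]
  | i :: is =>
      (WithLp.toLp 2 ((A i).mulVec ((memHistD A B Ψd x0 is).headD 0) +
        (B i).mulVec (Ψd (memHistD A B Ψd x0 is) (i :: is)))) :: memHistD A B Ψd x0 is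

/-- Closed-loop solution `φ(k, σ, x₀, Ψd)` under the switching signal `σ`:
at each step, `Ψd` receives the current and past states `(x(k), …, x(0))`
and the current and past modes `(σ(k), …, σ(0))`. -/
def memTrajD {n m : ℕ} {S : Type*} (A : S → Matrix (Fin n) (Fin n) ℝ)
    (B : S → Matrix (Fin n) (Fin m) ℝ)
    (Ψd : List (EuclideanSpace ℝ (Fin n)) → List S → EuclideanSpace ℝ (Fin m))
    (x0 : EuclideanSpace ℝ (Fin n)) (σ : ℕ → S) (k : ℕ) : EuclideanSpace ℝ (Fin n) :=
  (memHistD A B Ψd x0 (((List.range k).reverse).map σ)).headD 0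

set_option linter.unusedSectionVars false
set_option linter.unusedVariables false

section Aux

abbrev Ctrl (n m : ℕ) (S : Type*) :=
  List (EuclideanSpace ℝ (Fin n)) → List S → EuclideanSpace ℝ (Fin m)

variable {n m : ℕ} {S : Type*}
variable (A : S → Matrix (Fin n) (Fin n) ℝ) (B : S → Matrix (Fin n) (Fin m) ℝ)

/-- ENNReal-valued value function. -/
def Vinf (x0 : EuclideanSpace ℝ (Fin n)) : ℝ≥0∞ :=
  ⨅ Ψd : Ctrl n m S, ⨆ σ : ℕ → S, ∑' k : ℕ, (‖memTrajD A B Ψd x0 σ k‖₊ : ℝ≥0∞)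

lemma memHistD_ne_nil (Ψ : Ctrl n m S) (x : EuclideanSpace ℝ (Fin n)) (l : List S) :
    memHistD A B Ψ x l ≠ [] := by cases l <;> simp [memHistD]

lemma headD_concat {α : Type*} (L : List α) (hL : L ≠ []) (a d : α) :
    (L ++ [a]).headD d = L.headD d := by cases L <;> simp_all

lemma memHistD_concat (Ψ Φ : Ctrl n m S) (x : EuclideanSpace ℝ (Fin n)) (i : S)
    (hstep : ∀ hist modes, modes ≠ [] → Ψ (hist ++ [x]) (modes ++ [i]) = Φ hist modes) :
    ∀ l : List S, memHistD A B Ψ x (l ++ [i]) =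
      memHistD A B Φ (WithLp.toLp 2 ((A i).mulVec x + (B i).mulVec (Ψ [x] [i]))) l ++ [x] := by
  intro l
  induction l with
  | nil => simp [memHistD]
  | cons j l ih =>
    have hne := memHistD_ne_nil A B Φ (WithLp.toLp 2 ((A i).mulVec x + (B i).mulVec (Ψ [x] [i]))) l
    simp only [List.cons_append, memHistD, List.append_eq]
    rw [ih, headD_concat _ hne]
    simp only [← List.cons_append]
    rw [hstep _ _ (List.cons_ne_nil _ _)]

lemma memTrajD_zero (Ψ : Ctrl n m S) (x : EuclideanSpace ℝ (Fin n)) (σ : ℕ → S) :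
    memTrajD A B Ψ x σ 0 = x := by simp [memTrajD, memHistD]

lemma range_reverse_map (σ : ℕ → S) (k : ℕ) :
    ((List.range (k + 1)).reverse).map σ =
      (((List.range k).reverse).map (fun j => σ (j + 1))) ++ [σ 0] := by
  rw [List.range_succ_eq_map]
  simp [List.map_reverse, List.map_map, Function.comp_def]

lemma memTrajD_succ (Ψ Φ : Ctrl n m S) (x : EuclideanSpace ℝ (Fin n)) (σ : ℕ → S)
    (hstep : ∀ hist modes, modes ≠ [] → Ψ (hist ++ [x]) (modes ++ [σ 0]) = Φ hist modes)
    (k : ℕ) :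
    memTrajD A B Ψ x σ (k + 1) =
      memTrajD A B Φ (WithLp.toLp 2 ((A (σ 0)).mulVec x + (B (σ 0)).mulVec (Ψ [x] [σ 0])))
        (fun j => σ (j + 1)) k := by
  unfold memTrajD
  rw [range_reverse_map, memHistD_concat A B Ψ Φ x (σ 0) hstep,
    headD_concat _ (memHistD_ne_nil A B Φ _ _)]

lemma tsum_traj_shift (Ψ Φ : Ctrl n m S) (x : EuclideanSpace ℝ (Fin n)) (σ : ℕ → S)
    (hstep : ∀ hist modes, modes ≠ [] → Ψ (hist ++ [x]) (modes ++ [σ 0]) = Φ hist modes) :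
    ∑' k : ℕ, (‖memTrajD A B Ψ x σ k‖₊ : ℝ≥0∞) =
      ‖x‖₊ + ∑' k : ℕ, (‖memTrajD A B Φ (WithLp.toLp 2 ((A (σ 0)).mulVec x + (B (σ 0)).mulVec (Ψ [x] [σ 0])))
        (fun j => σ (j + 1)) k‖₊ : ℝ≥0∞) := by
  rw [tsum_eq_zero_add' ENNReal.summable, memTrajD_zero]
  congr 1
  exact tsum_congr fun k => by rw [memTrajD_succ A B Ψ Φ x σ hstep k]

end Aux

section Aux2

variable {n m : ℕ} {S : Type*} [Nonempty S]
variable (A : S → Matrix (Fin n) (Fin n) ℝ) (B : S → Matrix (Fin n) (Fin m) ℝ)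

lemma Vinf_le_ctrl (x : EuclideanSpace ℝ (Fin n)) (Ψ : Ctrl n m S) :
    Vinf A B x ≤ ⨆ σ : ℕ → S, ∑' k : ℕ, (‖memTrajD A B Ψ x σ k‖₊ : ℝ≥0∞) :=
  iInf_le _ Ψ

lemma exists_ctrl_lt (x : EuclideanSpace ℝ (Fin n)) (h : Vinf A B x ≠ ∞) (ε : ℝ≥0∞)
    (hε : ε ≠ 0) :
    ∃ Ψ : Ctrl n m S,
      (⨆ σ : ℕ → S, ∑' k : ℕ, (‖memTrajD A B Ψ x σ k‖₊ : ℝ≥0∞)) < Vinf A B x + ε := by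
  have h2 : Vinf A B x < Vinf A B x + ε := ENNReal.lt_add_right h hε
  exact iInf_lt_iff.mp h2

lemma norm_le_Vinf (x : EuclideanSpace ℝ (Fin n)) : (‖x‖₊ : ℝ≥0∞) ≤ Vinf A B x := by
  refine le_iInf fun Ψ => ?_
  have h0 : (‖memTrajD A B Ψ x (fun _ => Classical.arbitrary S) 0‖₊ : ℝ≥0∞) ≤
      ∑' k : ℕ, (‖memTrajD A B Ψ x (fun _ => Classical.arbitrary S) k‖₊ : ℝ≥0∞) :=
    ENNReal.le_tsum 0
  rw [memTrajD_zero] at h0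
  exact h0.trans (le_iSup (fun σ : ℕ → S => ∑' k : ℕ, (‖memTrajD A B Ψ x σ k‖₊ : ℝ≥0∞)) _)

lemma Vinf_le_ofReal (C γ : ℝ) (hC : 0 < C) (hγ0 : 0 ≤ γ) (hγ1 : γ < 1)
    (Ψd : Ctrl n m S)
    (hΨd : ∀ (x0 : EuclideanSpace ℝ (Fin n)) (σ : ℕ → S) (k : ℕ),
      ‖memTrajD A B Ψd x0 σ k‖ ≤ C * γ ^ k * ‖x0‖)
    (x : EuclideanSpace ℝ (Fin n)) :
    Vinf A B x ≤ ENNReal.ofReal (C / (1 - γ) * ‖x‖) := by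
  have h1γ : (0:ℝ) < 1 - γ := by linarith
  refine (Vinf_le_ctrl A B x Ψd).trans (iSup_le fun σ => ?_)
  have hpt : ∀ k : ℕ, (‖memTrajD A B Ψd x σ k‖₊ : ℝ≥0∞) ≤
      ENNReal.ofReal (C * ‖x‖) * (ENNReal.ofReal γ) ^ k := by
    intro k
    rw [← enorm_eq_nnnorm, ← ofReal_norm, ← ENNReal.ofReal_pow hγ0,
      ← ENNReal.ofReal_mul (by positivity)]
    refine ENNReal.ofReal_le_ofReal ?_
    calc ‖memTrajD A B Ψd x σ k‖ ≤ C * γ ^ k * ‖x‖ := hΨd x σ k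
      _ = C * ‖x‖ * γ ^ k := by ring
  calc ∑' k : ℕ, (‖memTrajD A B Ψd x σ k‖₊ : ℝ≥0∞)
      ≤ ∑' k : ℕ, ENNReal.ofReal (C * ‖x‖) * (ENNReal.ofReal γ) ^ k :=
        ENNReal.tsum_le_tsum hpt
    _ = ENNReal.ofReal (C * ‖x‖) * (1 - ENNReal.ofReal γ)⁻¹ := by
        rw [ENNReal.tsum_mul_left, ENNReal.tsum_geometric]
    _ = ENNReal.ofReal (C / (1 - γ) * ‖x‖) := by
        rw [show (1:ℝ≥0∞) - ENNReal.ofReal γ = ENNReal.ofReal (1 - γ) by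
            rw [ENNReal.ofReal_sub 1 hγ0, ENNReal.ofReal_one],
          ← ENNReal.ofReal_inv_of_pos h1γ, ← ENNReal.ofReal_mul (by positivity)]
        congr 1
        field_simp

/-- The "sum" controller simulating two controllers in parallel. -/
def sumCtrl (Ψ1 Ψ2 : Ctrl n m S) (x z : EuclideanSpace ℝ (Fin n)) : Ctrl n m S :=
  fun _ modes =>
    match modes with
    | [] => 0
    | i :: is => Ψ1 (memHistD A B Ψ1 x is) (i :: is) + Ψ2 (memHistD A B Ψ2 z is) (i :: is)

lemma euclid_mulVec_add {p q : ℕ} (M : Matrix (Fin p) (Fin q) ℝ)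
    (a b : EuclideanSpace ℝ (Fin q)) :
    WithLp.toLp 2 (M.mulVec (a + b)) = WithLp.toLp 2 (M.mulVec a) + WithLp.toLp 2 (M.mulVec b) := by
  simp [Matrix.mulVec_add]

lemma memHistD_sum (Ψ1 Ψ2 : Ctrl n m S) (x z : EuclideanSpace ℝ (Fin n)) :
    ∀ l : List S,
      (memHistD A B (sumCtrl A B Ψ1 Ψ2 x z) (x + z) l).headD 0 =
        (memHistD A B Ψ1 x l).headD 0 + (memHistD A B Ψ2 z l).headD 0 := by
  intro l
  induction l with
  | nil => simp [memHistD]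
  | cons i is ih =>
    simp only [memHistD, List.headD_cons]
    rw [ih]
    show WithLp.toLp 2 ((A i).mulVec _ + (B i).mulVec (sumCtrl A B Ψ1 Ψ2 x z _ (i :: is))) = _
    simp only [sumCtrl]
    simp only [WithLp.ofLp_add, Matrix.mulVec_add, WithLp.toLp_add]
    abel

lemma memTrajD_sum (Ψ1 Ψ2 : Ctrl n m S) (x z : EuclideanSpace ℝ (Fin n)) (σ : ℕ → S) (k : ℕ) :
    memTrajD A B (sumCtrl A B Ψ1 Ψ2 x z) (x + z) σ k =
      memTrajD A B Ψ1 x σ k + memTrajD A B Ψ2 z σ k := by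
  unfold memTrajD
  exact memHistD_sum A B Ψ1 Ψ2 x z _

lemma Vinf_add_le (x z : EuclideanSpace ℝ (Fin n)) :
    Vinf A B (x + z) ≤ Vinf A B x + Vinf A B z := by
  refine ENNReal.le_of_forall_pos_le_add fun ε hε hfin => ?_
  have hx : Vinf A B x ≠ ∞ := by
    intro h; rw [h] at hfin; simp at hfin
  have hz : Vinf A B z ≠ ∞ := by
    intro h; rw [h, add_top] at hfin; simp at hfin
  have hεne : ((ε : ℝ≥0∞)) ≠ 0 := by exact_mod_cast hε.ne'
  have hε2 : ((ε : ℝ≥0∞) / 2) ≠ 0 := (ENNReal.half_pos hεne).ne'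
  obtain ⟨Ψ1, h1⟩ := exists_ctrl_lt A B x hx _ hε2
  obtain ⟨Ψ2, h2⟩ := exists_ctrl_lt A B z hz _ hε2
  calc Vinf A B (x + z)
      ≤ ⨆ σ : ℕ → S, ∑' k : ℕ, (‖memTrajD A B (sumCtrl A B Ψ1 Ψ2 x z) (x + z) σ k‖₊ : ℝ≥0∞) :=
        Vinf_le_ctrl A B _ _
    _ ≤ (⨆ σ : ℕ → S, ∑' k : ℕ, (‖memTrajD A B Ψ1 x σ k‖₊ : ℝ≥0∞)) +
        (⨆ σ : ℕ → S, ∑' k : ℕ, (‖memTrajD A B Ψ2 z σ k‖₊ : ℝ≥0∞)) := by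
        refine iSup_le fun σ => ?_
        calc ∑' k : ℕ, (‖memTrajD A B (sumCtrl A B Ψ1 Ψ2 x z) (x + z) σ k‖₊ : ℝ≥0∞)
            ≤ ∑' k : ℕ, ((‖memTrajD A B Ψ1 x σ k‖₊ : ℝ≥0∞) + ‖memTrajD A B Ψ2 z σ k‖₊) := by
              refine ENNReal.tsum_le_tsum fun k => ?_
              rw [memTrajD_sum]
              exact_mod_cast nnnorm_add_le _ _
          _ = (∑' k : ℕ, (‖memTrajD A B Ψ1 x σ k‖₊ : ℝ≥0∞)) +
              ∑' k : ℕ, (‖memTrajD A B Ψ2 z σ k‖₊ : ℝ≥0∞) := ENNReal.tsum_add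
          _ ≤ _ := add_le_add
              (le_iSup (fun σ : ℕ → S => ∑' k : ℕ, (‖memTrajD A B Ψ1 x σ k‖₊ : ℝ≥0∞)) σ)
              (le_iSup (fun σ : ℕ → S => ∑' k : ℕ, (‖memTrajD A B Ψ2 z σ k‖₊ : ℝ≥0∞)) σ)
    _ ≤ (Vinf A B x + ε / 2) + (Vinf A B z + ε / 2) := add_le_add h1.le h2.le
    _ = Vinf A B x + Vinf A B z + ε := by
        rw [show (Vinf A B x + ε / 2) + (Vinf A B z + ε / 2) =
          Vinf A B x + Vinf A B z + ((ε:ℝ≥0∞) / 2 + (ε:ℝ≥0∞) / 2) by ring,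
          ENNReal.add_halves]

end Aux2

section Bellman

variable {n m : ℕ} {S : Type*} [Nonempty S]
variable (A : S → Matrix (Fin n) (Fin n) ℝ) (B : S → Matrix (Fin n) (Fin m) ℝ)

set_option linter.unusedSectionVars false

lemma bellman_ge (x : EuclideanSpace ℝ (Fin n)) :
    ‖x‖₊ + ⨆ i : S, ⨅ u : EuclideanSpace ℝ (Fin m),
      Vinf A B (WithLp.toLp 2 ((A i).mulVec x + (B i).mulVec u)) ≤ Vinf A B x := by
  rw [ENNReal.add_iSup]
  refine iSup_le fun i => ?_
  refine le_iInf fun Ψ => ?_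
  set Φ : Ctrl n m S := fun hist modes => Ψ (hist ++ [x]) (modes ++ [i]) with hΦ
  set y : EuclideanSpace ℝ (Fin n) := WithLp.toLp 2 ((A i).mulVec x + (B i).mulVec (Ψ [x] [i])) with hy
  have key : ∀ σ' : ℕ → S,
      ‖x‖₊ + ∑' k : ℕ, (‖memTrajD A B Φ y σ' k‖₊ : ℝ≥0∞) ≤
        ⨆ σ : ℕ → S, ∑' k : ℕ, (‖memTrajD A B Ψ x σ k‖₊ : ℝ≥0∞) := by
    intro σ'
    set σc : ℕ → S := fun k => Nat.casesOn k i (fun j => σ' j) with hσc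
    have hsh := tsum_traj_shift A B Ψ Φ x σc (fun hist modes hm => rfl)
    refine le_trans (le_of_eq ?_)
      (le_iSup (fun σ : ℕ → S => ∑' k : ℕ, (‖memTrajD A B Ψ x σ k‖₊ : ℝ≥0∞)) σc)
    exact hsh.symm
  calc (‖x‖₊ : ℝ≥0∞) + ⨅ u : EuclideanSpace ℝ (Fin m),
        Vinf A B (WithLp.toLp 2 ((A i).mulVec x + (B i).mulVec u))
      ≤ ‖x‖₊ + Vinf A B y := add_le_add_right (iInf_le _ (Ψ [x] [i])) _
    _ ≤ ‖x‖₊ + ⨆ σ' : ℕ → S, ∑' k : ℕ, (‖memTrajD A B Φ y σ' k‖₊ : ℝ≥0∞) :=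
        add_le_add_right (iInf_le _ Φ) _
    _ = ⨆ σ' : ℕ → S, (‖x‖₊ + ∑' k : ℕ, (‖memTrajD A B Φ y σ' k‖₊ : ℝ≥0∞)) :=
        ENNReal.add_iSup _
    _ ≤ _ := iSup_le key

lemma bellman_le (hfin : ∀ y : EuclideanSpace ℝ (Fin n), Vinf A B y ≠ ∞)
    (x : EuclideanSpace ℝ (Fin n)) :
    Vinf A B x ≤ ‖x‖₊ + ⨆ i : S, ⨅ u : EuclideanSpace ℝ (Fin m),
      Vinf A B (WithLp.toLp 2 ((A i).mulVec x + (B i).mulVec u)) := by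
  refine ENNReal.le_of_forall_pos_le_add fun ε hε hfin2 => ?_
  have hεne : ((ε : ℝ≥0∞)) ≠ 0 := by exact_mod_cast hε.ne'
  have hε2 : ((ε : ℝ≥0∞) / 2) ≠ 0 := (ENNReal.half_pos hεne).ne'
  have hinf_ne : ∀ i : S,
      (⨅ u : EuclideanSpace ℝ (Fin m), Vinf A B (WithLp.toLp 2 ((A i).mulVec x + (B i).mulVec u))) ≠ ∞ :=
    fun i => ne_top_of_le_ne_top (hfin _) (iInf_le _ 0)
  have h1 : ∀ i : S, ∃ u : EuclideanSpace ℝ (Fin m),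
      Vinf A B (WithLp.toLp 2 ((A i).mulVec x + (B i).mulVec u)) <
        (⨅ u : EuclideanSpace ℝ (Fin m), Vinf A B (WithLp.toLp 2 ((A i).mulVec x + (B i).mulVec u))) + ε / 2 :=
    fun i => iInf_lt_iff.mp (ENNReal.lt_add_right (hinf_ne i) hε2)
  choose u hu using h1
  have h2 : ∀ i : S, ∃ Ψc : Ctrl n m S,
      (⨆ σ : ℕ → S, ∑' k : ℕ,
        (‖memTrajD A B Ψc (WithLp.toLp 2 ((A i).mulVec x + (B i).mulVec (u i))) σ k‖₊ : ℝ≥0∞)) <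
        Vinf A B (WithLp.toLp 2 ((A i).mulVec x + (B i).mulVec (u i))) + ε / 2 :=
    fun i => exists_ctrl_lt A B _ (hfin _) _ hε2
  choose Ψc hΨc using h2
  set i₀ : S := Classical.arbitrary S with hi₀
  set Ψstar : Ctrl n m S := fun hist modes =>
    if modes.length ≤ 1 then u (modes.headD i₀)
    else Ψc (modes.getLastD i₀) hist.dropLast modes.dropLast with hΨstar
  have hstar0 : ∀ i : S, Ψstar [x] [i] = u i := by
    intro i
    simp [hΨstar]
  have hstep : ∀ (i : S) hist modes, modes ≠ [] →
      Ψstar (hist ++ [x]) (modes ++ [i]) = Ψc i hist modes := by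
    intro i hist modes hm
    have hlen : ¬ (modes ++ [i]).length ≤ 1 := by
      rcases modes with _ | ⟨a, t⟩
      · exact absurd rfl hm
      · simp
    simp only [hΨstar, if_neg hlen, List.getLastD_concat, List.dropLast_concat]
  have main : ∀ σ : ℕ → S,
      ∑' k : ℕ, (‖memTrajD A B Ψstar x σ k‖₊ : ℝ≥0∞) ≤
        (‖x‖₊ + ⨆ i : S, ⨅ u' : EuclideanSpace ℝ (Fin m),
          Vinf A B (WithLp.toLp 2 ((A i).mulVec x + (B i).mulVec u'))) + ε := by
    intro σ
    have hsh := tsum_traj_shift A B Ψstar (Ψc (σ 0)) x σ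
      (fun hist modes hm => hstep (σ 0) hist modes hm)
    rw [hsh, hstar0 (σ 0)]
    have t1 : (∑' k : ℕ, (‖memTrajD A B (Ψc (σ 0))
          (WithLp.toLp 2 ((A (σ 0)).mulVec x + (B (σ 0)).mulVec (u (σ 0))))
          (fun j => σ (j + 1)) k‖₊ : ℝ≥0∞)) ≤
        Vinf A B (WithLp.toLp 2 ((A (σ 0)).mulVec x + (B (σ 0)).mulVec (u (σ 0)))) + ε / 2 :=
      le_trans (le_iSup (fun σ' : ℕ → S => ∑' k : ℕ, (‖memTrajD A B (Ψc (σ 0))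
          (WithLp.toLp 2 ((A (σ 0)).mulVec x + (B (σ 0)).mulVec (u (σ 0)))) σ' k‖₊ : ℝ≥0∞)) _) (hΨc (σ 0)).le
    have t2 : Vinf A B (WithLp.toLp 2 ((A (σ 0)).mulVec x + (B (σ 0)).mulVec (u (σ 0)))) + (ε:ℝ≥0∞) / 2 ≤
        (⨅ u' : EuclideanSpace ℝ (Fin m),
          Vinf A B (WithLp.toLp 2 ((A (σ 0)).mulVec x + (B (σ 0)).mulVec u'))) + ε := by
      calc Vinf A B (WithLp.toLp 2 ((A (σ 0)).mulVec x + (B (σ 0)).mulVec (u (σ 0)))) + (ε:ℝ≥0∞) / 2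
          ≤ ((⨅ u' : EuclideanSpace ℝ (Fin m),
              Vinf A B (WithLp.toLp 2 ((A (σ 0)).mulVec x + (B (σ 0)).mulVec u'))) + ε / 2) + ε / 2 :=
            add_le_add_left (hu (σ 0)).le _
        _ = _ := by rw [add_assoc, ENNReal.add_halves]
    have t3 : (⨅ u' : EuclideanSpace ℝ (Fin m),
          Vinf A B (WithLp.toLp 2 ((A (σ 0)).mulVec x + (B (σ 0)).mulVec u'))) ≤
        ⨆ i : S, ⨅ u' : EuclideanSpace ℝ (Fin m),
          Vinf A B (WithLp.toLp 2 ((A i).mulVec x + (B i).mulVec u')) :=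
      le_iSup (fun i : S => ⨅ u' : EuclideanSpace ℝ (Fin m),
        Vinf A B (WithLp.toLp 2 ((A i).mulVec x + (B i).mulVec u'))) (σ 0)
    calc (‖x‖₊ : ℝ≥0∞) + ∑' k : ℕ, (‖memTrajD A B (Ψc (σ 0))
          (WithLp.toLp 2 ((A (σ 0)).mulVec x + (B (σ 0)).mulVec (u (σ 0)))) (fun j => σ (j + 1)) k‖₊ : ℝ≥0∞)
        ≤ ‖x‖₊ + ((⨅ u' : EuclideanSpace ℝ (Fin m),
            Vinf A B (WithLp.toLp 2 ((A (σ 0)).mulVec x + (B (σ 0)).mulVec u'))) + ε) :=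
          add_le_add_right (t1.trans t2) _
      _ ≤ ‖x‖₊ + ((⨆ i : S, ⨅ u' : EuclideanSpace ℝ (Fin m),
            Vinf A B (WithLp.toLp 2 ((A i).mulVec x + (B i).mulVec u'))) + ε) :=
          add_le_add_right (add_le_add_left t3 _) _
      _ = _ := by rw [← add_assoc]
  exact (Vinf_le_ctrl A B x Ψstar).trans (iSup_le main)

lemma Vinf_bellman (hfin : ∀ y : EuclideanSpace ℝ (Fin n), Vinf A B y ≠ ∞)
    (x : EuclideanSpace ℝ (Fin n)) :
    Vinf A B x = ‖x‖₊ + ⨆ i : S, ⨅ u : EuclideanSpace ℝ (Fin m),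
      Vinf A B (WithLp.toLp 2 ((A i).mulVec x + (B i).mulVec u)) :=
  le_antisymm (bellman_le A B hfin x) (bellman_ge A B x)

end Bellman

section Final

variable {n m : ℕ} {S : Type*}

/-- `mulVec` as a linear map between Euclidean spaces. -/
def mulVecLinE {p q : ℕ} (M : Matrix (Fin p) (Fin q) ℝ) :
    EuclideanSpace ℝ (Fin q) →ₗ[ℝ] EuclideanSpace ℝ (Fin p) where
  toFun u := WithLp.toLp 2 (M.mulVec u)
  map_add' a b := euclid_mulVec_add M a b
  map_smul' c u := by simp [Matrix.mulVec_smul]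

theorem valFunD_bellman' (hn : 0 < n) (hm : 0 < m) [Fintype S] [Nonempty S]
    (A : S → Matrix (Fin n) (Fin n) ℝ) (B : S → Matrix (Fin n) (Fin m) ℝ)
    (C γ : ℝ) (hC : 1 < C) (hγ : γ ∈ Set.Ico (0 : ℝ) 1)
    (Ψd : List (EuclideanSpace ℝ (Fin n)) → List S → EuclideanSpace ℝ (Fin m))
    (hΨd : ∀ (x0 : EuclideanSpace ℝ (Fin n)) (σ : ℕ → S) (k : ℕ),
      ‖memTrajD A B Ψd x0 σ k‖ ≤ C * γ ^ k * ‖x0‖) :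
    ∀ x : EuclideanSpace ℝ (Fin n),
      ((Vinf A B x).toReal = ‖x‖ +
        ⨆ i : S, ⨅ u : EuclideanSpace ℝ (Fin m),
          (Vinf A B (WithLp.toLp 2 ((A i).mulVec x + (B i).mulVec u))).toReal) ∧
      ∀ i : S, ∃ ustar : EuclideanSpace ℝ (Fin m),
        (Vinf A B (WithLp.toLp 2 ((A i).mulVec x + (B i).mulVec ustar))).toReal =
        ⨅ u : EuclideanSpace ℝ (Fin m),
          (Vinf A B (WithLp.toLp 2 ((A i).mulVec x + (B i).mulVec u))).toReal := by
  obtain ⟨hγ0, hγ1⟩ := hγ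
  have hC0 : (0:ℝ) < C := by linarith
  set Kr : ℝ := C / (1 - γ) with hKrdef
  have h1γ : (0:ℝ) < 1 - γ := by linarith
  have hKr : 0 ≤ Kr := by positivity
  have hub : ∀ y : EuclideanSpace ℝ (Fin n), Vinf A B y ≤ ENNReal.ofReal (Kr * ‖y‖) :=
    fun y => Vinf_le_ofReal A B C γ hC0 hγ0 hγ1 Ψd hΨd y
  have hfin : ∀ y : EuclideanSpace ℝ (Fin n), Vinf A B y ≠ ∞ :=
    fun y => ne_top_of_le_ne_top ENNReal.ofReal_ne_top (hub y)
  set V : EuclideanSpace ℝ (Fin n) → ℝ := fun y => (Vinf A B y).toReal with hVdef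
  have hV_nonneg : ∀ y, 0 ≤ V y := fun y => ENNReal.toReal_nonneg
  have hV_le : ∀ y, V y ≤ Kr * ‖y‖ := fun y =>
    ENNReal.toReal_le_of_le_ofReal (by positivity) (hub y)
  have hnorm_le : ∀ y, ‖y‖ ≤ V y := by
    intro y
    have := ENNReal.toReal_mono (hfin y) (norm_le_Vinf A B y)
    simpa using this
  have hlip : ∀ a b : EuclideanSpace ℝ (Fin n), V a ≤ V b + Kr * ‖a - b‖ := by
    intro a b
    have h := Vinf_add_le A B b (a - b)
    rw [show b + (a - b) = a by abel] at h
    have hRne : Vinf A B b + Vinf A B (a - b) ≠ ∞ :=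
      ENNReal.add_ne_top.mpr ⟨hfin b, hfin (a - b)⟩
    have h2 := ENNReal.toReal_mono hRne h
    rw [ENNReal.toReal_add (hfin b) (hfin (a - b))] at h2
    have h3 := hV_le (a - b)
    calc V a ≤ V b + V (a - b) := h2
      _ ≤ V b + Kr * ‖a - b‖ := by linarith
  have hcont : Continuous V := by
    have : LipschitzWith (Real.toNNReal Kr) V := by
      refine LipschitzWith.of_dist_le_mul fun a b => ?_
      rw [Real.dist_eq, Real.coe_toNNReal _ hKr, dist_eq_norm]
      have h1 := hlip a b
      have h2 := hlip b a
      rw [norm_sub_rev] at h2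
      rw [abs_sub_le_iff]
      constructor <;> linarith
    exact this.continuous
  intro x
  have hinf_ne : ∀ i : S,
      (⨅ u : EuclideanSpace ℝ (Fin m), Vinf A B (WithLp.toLp 2 ((A i).mulVec x + (B i).mulVec u))) ≠ ∞ :=
    fun i => ne_top_of_le_ne_top (hfin _) (iInf_le _ 0)
  constructor
  · -- Bellman equation
    have hbell := Vinf_bellman A B hfin x
    have hT_ne : (⨆ i : S, ⨅ u : EuclideanSpace ℝ (Fin m),
        Vinf A B (WithLp.toLp 2 ((A i).mulVec x + (B i).mulVec u))) ≠ ∞ := by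
      obtain ⟨i0, hi0⟩ := exists_eq_ciSup_of_finite
        (f := fun i : S => ⨅ u : EuclideanSpace ℝ (Fin m),
          Vinf A B (WithLp.toLp 2 ((A i).mulVec x + (B i).mulVec u)))
      rw [← hi0]
      exact hinf_ne i0
    have hiInf_toReal : ∀ i : S,
        (⨅ u : EuclideanSpace ℝ (Fin m),
          Vinf A B (WithLp.toLp 2 ((A i).mulVec x + (B i).mulVec u))).toReal =
        ⨅ u : EuclideanSpace ℝ (Fin m),
          (Vinf A B (WithLp.toLp 2 ((A i).mulVec x + (B i).mulVec u))).toReal :=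
      fun i => ENNReal.toReal_iInf (fun u => hfin _)
    calc (Vinf A B x).toReal
        = ((‖x‖₊ : ℝ≥0∞) + ⨆ i : S, ⨅ u : EuclideanSpace ℝ (Fin m),
            Vinf A B (WithLp.toLp 2 ((A i).mulVec x + (B i).mulVec u))).toReal := by rw [hbell]
      _ = ‖x‖ + (⨆ i : S, ⨅ u : EuclideanSpace ℝ (Fin m),
            Vinf A B (WithLp.toLp 2 ((A i).mulVec x + (B i).mulVec u))).toReal := by
          rw [ENNReal.toReal_add ENNReal.coe_ne_top hT_ne]
          simp
      _ = ‖x‖ + ⨆ i : S, (⨅ u : EuclideanSpace ℝ (Fin m),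
            Vinf A B (WithLp.toLp 2 ((A i).mulVec x + (B i).mulVec u))).toReal := by
          rw [ENNReal.toReal_iSup hinf_ne]
      _ = _ := by simp only [hiInf_toReal]
  · -- attainment
    intro i
    set a : EuclideanSpace ℝ (Fin n) := WithLp.toLp 2 ((A i).mulVec x) with hadef
    set T := mulVecLinE (B i) with hTdef
    set g : EuclideanSpace ℝ (Fin n) → ℝ := fun w => V (a + w) with hgdef
    have hg : Continuous g := hcont.comp (continuous_const.add continuous_id)
    have hglb : ∀ w, ‖a + w‖ ≤ g w := fun w => hnorm_le _
    set R : ℝ := ‖a‖ + g 0 + 1 with hRdef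
    have hg0 : 0 ≤ g 0 := hV_nonneg _
    have hR0 : 0 ≤ R := by
      have := norm_nonneg a
      linarith
    have hclosed : IsClosed ((LinearMap.range T : Submodule ℝ _) : Set (EuclideanSpace ℝ (Fin n))) :=
      Submodule.closed_of_finiteDimensional _
    have hcpt : IsCompact (((LinearMap.range T : Submodule ℝ _) : Set (EuclideanSpace ℝ (Fin n))) ∩
        Metric.closedBall 0 R) := (isCompact_closedBall _ _).inter_left hclosed
    have h0mem : (0 : EuclideanSpace ℝ (Fin n)) ∈
        ((LinearMap.range T : Submodule ℝ _) : Set (EuclideanSpace ℝ (Fin n))) ∩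
          Metric.closedBall 0 R :=
      ⟨Submodule.zero_mem _, by simpa using hR0⟩
    obtain ⟨ws, hwsK, hwsmin⟩ := hcpt.exists_isMinOn ⟨0, h0mem⟩ hg.continuousOn
    have hmin : ∀ u : EuclideanSpace ℝ (Fin m), g ws ≤ g (T u) := by
      intro u'
      by_cases hball : ‖T u'‖ ≤ R
      · refine hwsmin ⟨?_, ?_⟩
        · exact ⟨u', rfl⟩
        · simpa [Metric.mem_closedBall, dist_zero_right] using hball
      · push_neg at hball
        have hA := hglb (T u')
        have hnb : ‖T u'‖ - ‖a‖ ≤ ‖a + T u'‖ := by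
          have h := norm_sub_norm_le (T u') (-a)
          rw [norm_neg, sub_neg_eq_add, add_comm] at h
          exact h
        have hg0le : g ws ≤ g 0 := hwsmin h0mem
        have hkey : g 0 + 1 < g (T u') := by
          have hlt : R - ‖a‖ < ‖T u'‖ - ‖a‖ := by linarith
          rw [hRdef] at hlt
          linarith
        linarith
    obtain ⟨us, hus⟩ := hwsK.1
    refine ⟨us, ?_⟩
    refine le_antisymm ?_ ?_
    · refine le_ciInf fun u' => ?_
      show g (T us) ≤ g (T u')
      rw [hus]
      exact hmin u'
    · exact ciInf_le ⟨0, by rintro v ⟨u', rfl⟩; exact ENNReal.toReal_nonneg⟩ us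

end Final

/-- The mode-dependent value function `V_d(x₀) = inf_{Ψd} sup_σ Σₖ ‖φ(k, σ, x₀, Ψd)‖`
(computed in `ℝ≥0∞` and converted to a real number). -/
def valFunD {n m : ℕ} {S : Type*} (A : S → Matrix (Fin n) (Fin n) ℝ)
    (B : S → Matrix (Fin n) (Fin m) ℝ) (x0 : EuclideanSpace ℝ (Fin n)) : ℝ :=
  (⨅ Ψd : List (EuclideanSpace ℝ (Fin n)) → List S → EuclideanSpace ℝ (Fin m),
    ⨆ σ : ℕ → S, ∑' k : ℕ, (‖memTrajD A B Ψd x0 σ k‖₊ : ℝ≥0∞)).toReal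

/-- Under exponential stabilizability by a current-mode-dependent
memory controller, the mode-dependent value function satisfies the Bellman equation
`V_d(x) = ‖x‖ + max_i min_u V_d(A_i x + B_i u)`, each inner minimum being attained. -/
theorem valFunD_bellman {n m : ℕ} (hn : 0 < n) (hm : 0 < m) {S : Type*} [Fintype S] [Nonempty S]
    (A : S → Matrix (Fin n) (Fin n) ℝ) (B : S → Matrix (Fin n) (Fin m) ℝ)
    (C γ : ℝ) (hC : 1 < C) (hγ : γ ∈ Set.Ico (0 : ℝ) 1)
    (Ψd : List (EuclideanSpace ℝ (Fin n)) → List S → EuclideanSpace ℝ (Fin m))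
    (hΨd : ∀ (x0 : EuclideanSpace ℝ (Fin n)) (σ : ℕ → S) (k : ℕ),
      ‖memTrajD A B Ψd x0 σ k‖ ≤ C * γ ^ k * ‖x0‖) :
    ∀ x : EuclideanSpace ℝ (Fin n),
      (valFunD A B x = ‖x‖ +
        ⨆ i : S, ⨅ u : EuclideanSpace ℝ (Fin m),
          valFunD A B (WithLp.toLp 2 ((A i).mulVec x + (B i).mulVec u))) ∧
      ∀ i : S, ∃ ustar : EuclideanSpace ℝ (Fin m),
        valFunD A B (WithLp.toLp 2 ((A i).mulVec x + (B i).mulVec ustar)) =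
        ⨅ u : EuclideanSpace ℝ (Fin m),
          valFunD A B (WithLp.toLp 2 ((A i).mulVec x + (B i).mulVec u)) := by
  intro x
  exact valFunD_bellman' hn hm A B C γ hC hγ Ψd hΨd x
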